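/- Let X be a connected locally finite partially ordered set and R a commutative ring with unity. Then the center of the incidence algebra I(X,R) consists exactly of the scalar multiples of the identity δ, i.e. Z(I(X,R)) = R·δ ≅ R. -/
import Mathlib


variable {X R : Type*} [PartialOrder X] [LocallyFiniteOrder X] [DecidableEq X] [CommRing R]

/-- Membership in the incidence algebra `I(X,R)`. -/
def IsInc (f : X → X → R) : Prop := ∀ x y : X, ¬ x ≤ y → f x y = 0

/-- The convolution product of the incidence algebra. -/
def conv (f g : X → X → R) : X → X → R :=
  fun x y => ∑ z ∈ Finset.Icc x y, f x z * g z y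

/-- The identity `δ` of `I(X,R)`. -/
def delta : X → X → R := fun x y => if x = y then 1 else 0

lemma conv_delta_left (f : X → X → R) (hf : IsInc f) : conv delta f = f := by
  funext x y
  by_cases hxy : x ≤ y
  · unfold conv delta
    rw [Finset.sum_eq_single x]
    · simp
    · intro z _ hz; simp [Ne.symm hz]
    · intro h; exact absurd (Finset.mem_Icc.mpr ⟨le_refl x, hxy⟩) h
  · unfold conv
    rw [Finset.Icc_eq_empty hxy, Finset.sum_empty, hf x y hxy]

lemma conv_delta_right (f : X → X → R) (hf : IsInc f) : conv f delta = f := by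
  funext x y
  by_cases hxy : x ≤ y
  · unfold conv delta
    rw [Finset.sum_eq_single y]
    · simp
    · intro z _ hz; simp [hz]
    · intro h; exact absurd (Finset.mem_Icc.mpr ⟨hxy, le_refl y⟩) h
  · unfold conv
    rw [Finset.Icc_eq_empty hxy, Finset.sum_empty, hf x y hxy]

/-- if `X` is a connected locally finite poset, the center of `I(X,R)` is
exactly `R·δ`. -/
theorem center_incidence_eq
    (hconn : ∀ x y : X, Relation.ReflTransGen (fun a b : X => a ≤ b ∨ b ≤ a) x y) :
    ∀ c : X → X → R,
      (IsInc c ∧ ∀ f : X → X → R, IsInc f → conv c f = conv f c) ↔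
        ∃ r : R, c = r • (delta : X → X → R) := by
  intro c
  constructor
  · rintro ⟨hc, hcomm⟩
    -- diagonal constancy along ≤
    have diag : ∀ a b : X, a ≤ b → c a a = c b b := by
      intro a b hab
      set f : X → X → R := fun u v => if u = a ∧ v = b then 1 else 0 with hfdef
      have hf : IsInc f := by
        intro u v huv
        simp only [hfdef]
        split
        · next h => exact absurd (h.1 ▸ h.2 ▸ hab) huv
        · rfl
      have h := congrFun (congrFun (hcomm f hf) a) b
      unfold conv at h
      rw [Finset.sum_eq_single a (fun z _ hz' => by simp [hfdef, hz'])
            (fun h' => absurd (Finset.mem_Icc.mpr ⟨le_refl a, hab⟩) h'),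
          Finset.sum_eq_single b (fun z _ hz' => by simp [hfdef, hz'])
            (fun h' => absurd (Finset.mem_Icc.mpr ⟨hab, le_refl b⟩) h')] at h
      simpa [hfdef] using h
    have offdiag : ∀ a b : X, a ≤ b → a ≠ b → c a b = 0 := by
      intro a b hab hne
      set f : X → X → R := fun u v => if u = b ∧ v = b then 1 else 0 with hfdef
      have hf : IsInc f := by
        intro u v huv
        simp only [hfdef]
        split
        · next h => exact absurd (h.1 ▸ h.2 ▸ le_refl b) huv
        · rfl
      have h := congrFun (congrFun (hcomm f hf) a) b
      unfold conv at h
      rw [Finset.sum_eq_single b (fun z _ hz' => by simp [hfdef, hz'])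
            (fun h' => absurd (Finset.mem_Icc.mpr ⟨hab, le_refl b⟩) h')] at h
      · have h2 : (∑ z ∈ Finset.Icc a b, f a z * c z b) = 0 := by
          apply Finset.sum_eq_zero
          intro z _
          have : ¬ (a = b ∧ z = b) := fun hh => hne hh.1
          simp [hfdef, this]
        rw [h2] at h
        simpa [hfdef] using h
    rcases isEmpty_or_nonempty X with hX | hX
    · exact ⟨0, funext fun x => (IsEmpty.false x).elim⟩
    · obtain ⟨x₀⟩ := hX
      refine ⟨c x₀ x₀, ?_⟩
      have key : ∀ a b : X, (a ≤ b ∨ b ≤ a) → c a a = c b b := fun a b h =>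
        h.elim (diag a b) (fun h' => (diag b a h').symm)
      have const : ∀ x : X, c x x = c x₀ x₀ := by
        intro x
        induction hconn x₀ x with
        | refl => rfl
        | tail _ h ih => rw [← key _ _ h]; exact ih
      funext x y
      by_cases hxy : x = y
      · subst hxy
        simp [delta, const x]
      · simp only [Pi.smul_apply, delta, if_neg hxy, smul_zero]
        by_cases hle : x ≤ y
        · exact offdiag x y hle hxy
        · exact hc x y hle
  · rintro ⟨r, rfl⟩
    constructor
    · intro x y hxy
      have : x ≠ y := fun h => hxy (h ▸ le_refl x)
      simp [delta, this]
    · intro f hf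
      have h1 : conv (r • (delta : X → X → R)) f = r • conv delta f := by
        funext x y
        simp [conv, Finset.mul_sum, mul_assoc]
      have h2 : conv f (r • (delta : X → X → R)) = r • conv f delta := by
        funext x y
        simp [conv, Finset.mul_sum]
        ring_nf
        apply Finset.sum_congr rfl
        intro z _
        ring
      rw [h1, h2, conv_delta_left f hf, conv_delta_right f hf]
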